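/- Let $(S_n)$ be an irreducible recurrent Markov chain on a countable set $\Sigma$. For $x\in\Sigma$ let $\kappa(x)=\sup\{\alpha>0:\mathbb{E}_x[e^{\alpha\tau(x)}]<\infty\}$ with $\tau(x)$ the first return time to $x$, and for bounded $f$ with $\|f\|_\infty<\kappa(x)$ let $c(x,f)=\lim_n \frac1n\log\mathbb{E}_x[e^{\sum_{i=0}^{n-1}f(S_i)}]$. If $\|f\|_\infty < \frac12\inf(\kappa(x),\kappa(y))$, then $c(x,f) = c(y,f)$. -/

import Mathlib

open MeasureTheory Filter Real Topology Set
open scoped ENNReal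

lemma meas_cyl {St : Type*} [MeasurableSpace St] [MeasurableSingletonClass St]
    (γ : ℕ → St) (n : ℕ) :
    MeasurableSet {ω : ℕ → St | ∀ i ≤ n, ω i = γ i} := by
  have h : {ω : ℕ → St | ∀ i ≤ n, ω i = γ i}
      = ⋂ i ∈ Set.Iic n, (fun ω : ℕ → St => ω i) ⁻¹' {γ i} := by
    ext ω; simp [Set.mem_Iic]
  rw [h]
  exact MeasurableSet.biInter (Set.to_countable _)
    (fun i _ => measurable_pi_apply i (measurableSet_singleton _))

open scoped Classical in
lemma cyl_measure {St : Type*} [MeasurableSpace St] [MeasurableSingletonClass St]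
    (Pm : St → Measure (ℕ → St)) [∀ x, IsProbabilityMeasure (Pm x)]
    (Ptrans : St → St → ℝ)
    (hstart : ∀ x, Pm x {ω | ω 0 = x} = 1)
    (hMarkov : ∀ x, ∀ (n : ℕ) (γ : ℕ → St),
      Pm x {ω | ∀ i ≤ n + 1, ω i = γ i}
        = Pm x {ω | ∀ i ≤ n, ω i = γ i} * ENNReal.ofReal (Ptrans (γ n) (γ (n + 1))))
    (x : St) (γ : ℕ → St) (n : ℕ) :
    Pm x {ω | ∀ i ≤ n, ω i = γ i}
      = (if γ 0 = x then 1 else 0)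
        * ∏ i ∈ Finset.range n, ENNReal.ofReal (Ptrans (γ i) (γ (i+1))) := by
  induction n with
  | zero =>
    have hset : {ω : ℕ → St | ∀ i ≤ 0, ω i = γ i} = {ω | ω 0 = γ 0} := by
      ext ω
      constructor
      · intro h; exact h 0 le_rfl
      · intro h i hi
        have : i = 0 := Nat.le_zero.mp hi
        subst this; exact h
    rw [hset]
    simp only [Finset.range_zero, Finset.prod_empty, mul_one]
    split_ifs with h
    · rw [h]; exact hstart x
    · have hm : MeasurableSet {ω : ℕ → St | ω 0 = x} := by
        have h0 : {ω : ℕ → St | ω 0 = x} = (fun ω : ℕ → St => ω 0) ⁻¹' {x} := by ext; simp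
        rw [h0]; exact measurable_pi_apply 0 (measurableSet_singleton x)
      have hsub : {ω : ℕ → St | ω 0 = γ 0} ⊆ {ω : ℕ → St | ω 0 = x}ᶜ := by
        intro ω hω hx
        exact h (hω ▸ hx)
      refine le_antisymm ?_ zero_le
      calc Pm x {ω : ℕ → St | ω 0 = γ 0} ≤ Pm x {ω : ℕ → St | ω 0 = x}ᶜ := measure_mono hsub
        _ = 1 - Pm x {ω : ℕ → St | ω 0 = x} := prob_compl_eq_one_sub hm
        _ = 0 := by rw [hstart x]; simp
  | succ n ih =>
    rw [hMarkov x n γ, ih, Finset.prod_range_succ, mul_assoc]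

lemma cyl_inter {St : Type*} {γ δ : ℕ → St} {n m : ℕ} (hnm : n ≤ m)
    (h : ({ω : ℕ → St | ∀ i ≤ n, ω i = γ i} ∩ {ω | ∀ i ≤ m, ω i = δ i}).Nonempty) :
    {ω : ℕ → St | ∀ i ≤ n, ω i = γ i} ∩ {ω | ∀ i ≤ m, ω i = δ i}
      = {ω : ℕ → St | ∀ i ≤ m, ω i = δ i} := by
  obtain ⟨ω0, h1, h2⟩ := h
  rw [Set.inter_eq_right]
  intro ω hω i hi
  rw [hω i (hi.trans hnm), ← h2 i (hi.trans hnm), h1 i hi]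

lemma cyl_pi_system (St : Type*) :
    IsPiSystem {S : Set (ℕ → St) | ∃ (n : ℕ) (γ : ℕ → St), S = {ω | ∀ i ≤ n, ω i = γ i}} := by
  rintro S ⟨n, γ, rfl⟩ T ⟨m, δ, rfl⟩ hne
  rcases le_total n m with hnm | hmn
  · rw [cyl_inter hnm hne]
    exact ⟨m, δ, rfl⟩
  · rw [Set.inter_comm] at hne ⊢
    rw [cyl_inter hmn hne]
    exact ⟨n, γ, rfl⟩

lemma pi_generate (St : Type*) [Countable St] [MeasurableSpace St]
    [MeasurableSingletonClass St] :
    (inferInstance : MeasurableSpace (ℕ → St))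
      = MeasurableSpace.generateFrom
          {S : Set (ℕ → St) | ∃ (n : ℕ) (γ : ℕ → St), S = {ω | ∀ i ≤ n, ω i = γ i}} := by
  refine le_antisymm ?_ (MeasurableSpace.generateFrom_le ?_)
  · rw [show (inferInstance : MeasurableSpace (ℕ → St)) = MeasurableSpace.pi from rfl,
      MeasurableSpace.pi]
    refine iSup_le fun i => ?_
    rw [← measurable_iff_comap_le]
    intro s hs
    have hss : s = ⋃ a ∈ s, {a} := by simp
    have hpre : (fun ω : ℕ → St => ω i) ⁻¹' s = ⋃ a ∈ s, {ω : ℕ → St | ω i = a} := by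
      rw [hss]; ext ω; simp
    rw [hpre]
    refine MeasurableSet.biUnion (s.to_countable) fun a _ => ?_
    have hcyl : {ω : ℕ → St | ω i = a}
        = ⋃ v : Fin (i+1) → St,
            {ω : ℕ → St | ∀ j ≤ i, ω j = (fun k => if h : k < i then v ⟨k, by omega⟩ else a) j} := by
      ext ω
      simp only [Set.mem_iUnion, Set.mem_setOf_eq]
      constructor
      · intro hω
        refine ⟨fun k => ω k, fun j hj => ?_⟩
        by_cases h : j < i
        · simp [h]
        · have : j = i := by omega
          simp [h, this, hω]
      · rintro ⟨v, hv⟩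
        have := hv i le_rfl
        simpa using this
    rw [hcyl]
    exact MeasurableSet.iUnion fun v =>
      MeasurableSpace.measurableSet_generateFrom ⟨i, _, rfl⟩
  · rintro S ⟨n, γ, rfl⟩
    exact meas_cyl γ n


lemma shift_meas {St : Type*} [MeasurableSpace St] (p : ℕ) :
    Measurable (fun (ω : ℕ → St) (i : ℕ) => ω (p + i)) :=
  measurable_pi_lambda _ fun i => measurable_pi_apply (p + i)

lemma shift_map {St : Type*} [Countable St] [MeasurableSpace St] [MeasurableSingletonClass St]
    (Pm : St → Measure (ℕ → St)) [∀ x, IsProbabilityMeasure (Pm x)]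
    (Ptrans : St → St → ℝ)
    (hstart : ∀ x, Pm x {ω | ω 0 = x} = 1)
    (hMarkov : ∀ x, ∀ (n : ℕ) (γ : ℕ → St),
      Pm x {ω | ∀ i ≤ n + 1, ω i = γ i}
        = Pm x {ω | ∀ i ≤ n, ω i = γ i} * ENNReal.ofReal (Ptrans (γ n) (γ (n + 1))))
    (x y : St) (p : ℕ) (γ : ℕ → St) (hγ0 : γ 0 = x) (hγp : γ p = y) :
    Measure.map (fun (ω : ℕ → St) (i : ℕ) => ω (p + i))
        ((Pm x).restrict {ω | ∀ i ≤ p, ω i = γ i})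
      = (Pm x {ω | ∀ i ≤ p, ω i = γ i}) • Pm y := by
  classical
  set cylS : Set (ℕ → St) := {ω | ∀ i ≤ p, ω i = γ i} with hcylS
  have hcylm : MeasurableSet cylS := meas_cyl γ p
  set μ₁ := Measure.map (fun (ω : ℕ → St) (i : ℕ) => ω (p + i)) ((Pm x).restrict cylS) with hμ₁
  have hfin : IsFiniteMeasure μ₁ := by
    constructor
    rw [hμ₁, Measure.map_apply (shift_meas p) MeasurableSet.univ]
    exact lt_of_le_of_lt (le_trans (measure_mono (Set.subset_univ _))
      (Measure.restrict_apply_le _ _)) (measure_lt_top _ _)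
  haveI := hfin
  refine ext_of_generate_finite _ (pi_generate St) (cyl_pi_system St) ?_ ?_
  · rintro S ⟨m, δ, rfl⟩
    have hSm : MeasurableSet {ω : ℕ → St | ∀ i ≤ m, ω i = δ i} := meas_cyl δ m
    rw [hμ₁, Measure.map_apply (shift_meas p) hSm, Measure.restrict_apply
      ((shift_meas p) hSm)]
    rw [Measure.smul_apply, smul_eq_mul]
    by_cases hδ : δ 0 = y
    · -- intersection is a longer cylinder
      set η : ℕ → St := fun i => if i ≤ p then γ i else δ (i - p) with hη
      have hset : (fun (ω : ℕ → St) (i : ℕ) => ω (p + i)) ⁻¹' {ω | ∀ i ≤ m, ω i = δ i} ∩ cylS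
          = {ω | ∀ i ≤ p + m, ω i = η i} := by
        ext ω
        simp only [Set.mem_inter_iff, Set.mem_preimage, Set.mem_setOf_eq, hcylS]
        constructor
        · rintro ⟨h1, h2⟩ i hi
          by_cases hip : i ≤ p
          · rw [hη]; simp only [hip, if_true]; exact h2 i hip
          · rw [hη]; simp only [hip, if_false]
            have h1' := h1 (i - p) (by omega)
            convert h1' using 2
            omega
        · intro h
          constructor
          · intro i hi
            have := h (p + i) (by omega)
            rcases Nat.eq_zero_or_pos i with h0 | h0
            · subst h0
              rw [hη] at this
              simp only [Nat.add_zero, le_refl, if_true] at this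
              rw [Nat.add_zero, this, hγp, hδ]
            · rw [hη] at this
              have hnp : ¬ p + i ≤ p := by omega
              simp only [hnp, if_false, Nat.add_sub_cancel_left] at this
              exact this
          · intro i hi
            have := h i (by omega)
            rw [hη] at this
            simp only [hi, if_true] at this
            exact this
      rw [hset]
      rw [cyl_measure Pm Ptrans hstart hMarkov x η (p + m),
        cyl_measure Pm Ptrans hstart hMarkov x γ p,
        cyl_measure Pm Ptrans hstart hMarkov y δ m]
      have hη0 : η 0 = x := by rw [hη]; simp [hγ0]
      rw [if_pos hη0, if_pos hγ0, if_pos hδ, Finset.prod_range_add]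
      have h1 : ∀ i ∈ Finset.range p,
          ENNReal.ofReal (Ptrans (η i) (η (i+1))) = ENNReal.ofReal (Ptrans (γ i) (γ (i+1))) := by
        intro i hi
        rw [Finset.mem_range] at hi
        have e1 : η i = γ i := by rw [hη]; simp [Nat.le_of_lt hi]
        have e2 : η (i+1) = γ (i+1) := by rw [hη]; simp [Nat.succ_le_of_lt hi]
        rw [e1, e2]
      have h2 : ∀ i ∈ Finset.range m,
          ENNReal.ofReal (Ptrans (η (p + i)) (η (p + i + 1)))
            = ENNReal.ofReal (Ptrans (δ i) (δ (i+1))) := by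
        intro i hi
        have e1 : η (p + i) = δ i := by
          rcases Nat.eq_zero_or_pos i with h0 | h0
          · subst h0; rw [hη]; simp [hγp, hδ]
          · rw [hη]
            have : ¬ p + i ≤ p := by omega
            simp only [this, if_false, Nat.add_sub_cancel_left]
        have e2 : η (p + i + 1) = δ (i + 1) := by
          rw [hη]
          have h3 : ¬ p + i + 1 ≤ p := by omega
          have h4 : p + i + 1 - p = i + 1 := by omega
          simp only [h3, if_false, h4]
        rw [e1, e2]
      rw [Finset.prod_congr rfl h1, Finset.prod_congr rfl h2]
      ring
    · -- empty intersection
      have hset : (fun (ω : ℕ → St) (i : ℕ) => ω (p + i)) ⁻¹' {ω | ∀ i ≤ m, ω i = δ i} ∩ cylS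
          = (∅ : Set (ℕ → St)) := by
        ext ω
        simp only [Set.mem_inter_iff, Set.mem_preimage, Set.mem_setOf_eq, hcylS,
          Set.mem_empty_iff_false, iff_false, not_and]
        intro h1 h2
        apply hδ
        have ha := h1 0 (Nat.zero_le m)
        have hb := h2 p le_rfl
        rw [Nat.add_zero] at ha
        rw [← ha, hb, hγp]
      rw [hset, measure_empty]
      rw [cyl_measure Pm Ptrans hstart hMarkov y δ m, if_neg hδ, zero_mul, mul_zero]
  · rw [hμ₁, Measure.map_apply (shift_meas p) MeasurableSet.univ, Set.preimage_univ,
      Measure.restrict_apply MeasurableSet.univ, Set.univ_inter,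
      Measure.smul_apply, smul_eq_mul, measure_univ, mul_one]


lemma growth_le {St : Type*} [Countable St] [Nonempty St]
    [MeasurableSpace St] [MeasurableSingletonClass St]
    (Pm : St → Measure (ℕ → St)) [∀ x, IsProbabilityMeasure (Pm x)]
    (Ptrans : St → St → ℝ)
    (hstart : ∀ x, Pm x {ω | ω 0 = x} = 1)
    (hMarkov : ∀ x, ∀ (n : ℕ) (γ : ℕ → St),
      Pm x {ω | ∀ i ≤ n + 1, ω i = γ i}
        = Pm x {ω | ∀ i ≤ n, ω i = γ i} * ENNReal.ofReal (Ptrans (γ n) (γ (n + 1))))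
    (f : St → ℝ) (M : ℝ) (hM : ∀ z, |f z| ≤ M)
    (x y : St) (hxy : ∃ n : ℕ, 0 < Pm x {ω | ω n = y})
    (cx cy : ℝ)
    (hcx : Tendsto (fun n : ℕ => (1 / (n : ℝ)) *
        Real.log (∫ ω, Real.exp (∑ i ∈ Finset.range n, f (ω i)) ∂Pm x))
      atTop (𝓝 cx))
    (hcy : Tendsto (fun n : ℕ => (1 / (n : ℝ)) *
        Real.log (∫ ω, Real.exp (∑ i ∈ Finset.range n, f (ω i)) ∂Pm y))
      atTop (𝓝 cy)) :
    cy ≤ cx := by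
  classical
  obtain ⟨p, hp⟩ := hxy
  -- extract a positive-measure cylinder ending at y
  obtain ⟨γ, hγp, hne⟩ : ∃ γ : ℕ → St, γ p = y ∧ Pm x {ω | ∀ i ≤ p, ω i = γ i} ≠ 0 := by
    set γv : (Fin (p+1) → St) → ℕ → St :=
      fun v k => if h : k < p + 1 then v ⟨k, h⟩ else y with hγv
    have hcover : {ω : ℕ → St | ω p = y}
        ⊆ ⋃ v : Fin (p+1) → St,
            ({ω : ℕ → St | ∀ i ≤ p, ω i = γv v i} ∩ {ω : ℕ → St | ω p = y}) := by
      intro ω hω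
      refine Set.mem_iUnion.mpr ⟨fun k => ω k, ⟨fun i hi => ?_, hω⟩⟩
      rw [hγv]; simp only []
      rw [dif_pos (by omega : i < p + 1)]
    have hex : ∃ v : Fin (p+1) → St,
        Pm x ({ω : ℕ → St | ∀ i ≤ p, ω i = γv v i} ∩ {ω : ℕ → St | ω p = y}) ≠ 0 := by
      by_contra h
      push_neg at h
      have h0 : Pm x (⋃ v : Fin (p+1) → St,
          ({ω : ℕ → St | ∀ i ≤ p, ω i = γv v i} ∩ {ω : ℕ → St | ω p = y})) = 0 :=
        measure_iUnion_null h
      have := measure_mono_null hcover h0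
      rw [this] at hp
      exact lt_irrefl _ hp
    obtain ⟨v, hv⟩ := hex
    obtain ⟨ω0, hω1, hω2⟩ := nonempty_of_measure_ne_zero hv
    refine ⟨γv v, ?_, ?_⟩
    · rw [← hω2]
      exact (hω1 p le_rfl).symm
    · intro h0
      exact hv (measure_mono_null Set.inter_subset_left h0)
  have hγ0 : γ 0 = x := by
    by_contra h
    apply hne
    rw [cyl_measure Pm Ptrans hstart hMarkov x γ p, if_neg h, zero_mul]
  -- notation
  set cylS : Set (ℕ → St) := {ω | ∀ i ≤ p, ω i = γ i} with hcylS
  have hcylm : MeasurableSet cylS := meas_cyl γ p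
  set I : St → ℕ → ℝ :=
    fun z n => ∫ ω, Real.exp (∑ i ∈ Finset.range n, f (ω i)) ∂Pm z with hI
  have hM0 : 0 ≤ M := le_trans (abs_nonneg _) (hM (Classical.arbitrary St))
  have hmeasA : ∀ n : ℕ, Measurable fun ω : ℕ → St =>
      Real.exp (∑ i ∈ Finset.range n, f (ω i)) := fun n =>
    Real.measurable_exp.comp (Finset.measurable_sum _ fun i _ =>
      (measurable_of_countable f).comp (measurable_pi_apply i))
  have hsumub : ∀ (n : ℕ) (ω : ℕ → St), (∑ i ∈ Finset.range n, f (ω i)) ≤ n * M := by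
    intro n ω
    calc (∑ i ∈ Finset.range n, f (ω i)) ≤ ∑ i ∈ Finset.range n, M :=
          Finset.sum_le_sum fun i _ => (abs_le.mp (hM (ω i))).2
      _ = n * M := by simp [mul_comm]
  have hsumlb : ∀ (n : ℕ) (ω : ℕ → St), -(n * M) ≤ ∑ i ∈ Finset.range n, f (ω i) := by
    intro n ω
    calc -((n : ℝ) * M) = ∑ _i ∈ Finset.range n, (-M) := by simp [mul_comm]
      _ ≤ ∑ i ∈ Finset.range n, f (ω i) :=
          Finset.sum_le_sum fun i _ => neg_le_of_abs_le (hM (ω i))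
  have hint : ∀ (z : St) (n : ℕ),
      Integrable (fun ω => Real.exp (∑ i ∈ Finset.range n, f (ω i))) (Pm z) := by
    intro z n
    refine Integrable.mono' (integrable_const (Real.exp (n * M)))
      (hmeasA n).aestronglyMeasurable (ae_of_all _ fun ω => ?_)
    rw [Real.norm_eq_abs, Real.abs_exp]
    exact Real.exp_le_exp.mpr (hsumub n ω)
  have hIpos : ∀ (z : St) (n : ℕ), 0 < I z n := by
    intro z n
    have h1 : Real.exp (-(n * M)) = ∫ _ω, Real.exp (-(n * M)) ∂Pm z := by
      simp
    have h2 : ∫ _ω, Real.exp (-(n * M)) ∂Pm z ≤ I z n := by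
      refine integral_mono (integrable_const _) (hint z n) fun ω => ?_
      exact Real.exp_le_exp.mpr (hsumlb n ω)
    exact lt_of_lt_of_le (h1 ▸ Real.exp_pos _) h2
  -- positivity of the cylinder constant
  have hc0fin : Pm x cylS ≠ ⊤ := measure_ne_top _ _
  have hc0pos : 0 < (Pm x cylS).toReal := ENNReal.toReal_pos hne hc0fin
  -- the key inequality
  have hkey : ∀ n : ℕ,
      Real.exp (-(p * M)) * (Pm x cylS).toReal * I y n ≤ I x (p + n) := by
    intro n
    set g : (ℕ → St) → ℝ := fun ω => Real.exp (∑ i ∈ Finset.range n, f (ω i)) with hg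
    have hgint : Integrable (fun ω : ℕ → St => g (fun i => ω (p + i))) (Pm x) := by
      refine Integrable.mono' (integrable_const (Real.exp (n * M)))
        (((hmeasA n).comp (shift_meas p)).aestronglyMeasurable)
        (ae_of_all _ fun ω => ?_)
      rw [Real.norm_eq_abs, Real.abs_exp]
      exact Real.exp_le_exp.mpr (hsumub n _)
    have e1 : ∫ ω in cylS, Real.exp (-(p * M)) * g (fun i => ω (p + i)) ∂Pm x
        = Real.exp (-(p * M)) * ((Pm x cylS).toReal * I y n) := by
      rw [integral_const_mul]
      congr 1
      have hmap : ∫ ω in cylS, g (fun i => ω (p + i)) ∂Pm x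
          = ∫ ω, g ω ∂(Measure.map (fun (ω : ℕ → St) (i : ℕ) => ω (p + i))
              ((Pm x).restrict cylS)) :=
        (integral_map (shift_meas p).aemeasurable (hmeasA n).aestronglyMeasurable).symm
      rw [hmap, shift_map Pm Ptrans hstart hMarkov x y p γ hγ0 hγp, integral_smul_measure]
      rfl
    have e2 : ∫ ω in cylS, Real.exp (-(p * M)) * g (fun i => ω (p + i)) ∂Pm x
        ≤ ∫ ω in cylS, Real.exp (∑ i ∈ Finset.range (p + n), f (ω i)) ∂Pm x := by
      refine setIntegral_mono ((hgint.const_mul _).integrableOn)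
        ((hint x (p + n)).integrableOn) fun ω => ?_
      rw [Finset.sum_range_add, Real.exp_add]
      refine mul_le_mul ?_ le_rfl (le_of_lt (Real.exp_pos _)) (le_of_lt (Real.exp_pos _))
      exact Real.exp_le_exp.mpr (hsumlb p ω)
    have e3 : ∫ ω in cylS, Real.exp (∑ i ∈ Finset.range (p + n), f (ω i)) ∂Pm x
        ≤ I x (p + n) :=
      setIntegral_le_integral (hint x (p + n)) (ae_of_all _ fun ω => le_of_lt (Real.exp_pos _))
    calc Real.exp (-(p * M)) * (Pm x cylS).toReal * I y n
        = ∫ ω in cylS, Real.exp (-(p * M)) * g (fun i => ω (p + i)) ∂Pm x := by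
          rw [e1]; ring
      _ ≤ _ := le_trans e2 e3
  -- take logarithms
  set K : ℝ := Real.log (Real.exp (-(p * M)) * (Pm x cylS).toReal) with hK
  have hcpos : 0 < Real.exp (-(p * M)) * (Pm x cylS).toReal :=
    mul_pos (Real.exp_pos _) hc0pos
  have hlog : ∀ n : ℕ, K + Real.log (I y n) ≤ Real.log (I x (p + n)) := by
    intro n
    rw [hK, ← Real.log_mul (ne_of_gt hcpos) (ne_of_gt (hIpos y n))]
    exact Real.log_le_log (mul_pos hcpos (hIpos y n)) (hkey n)
  -- limits
  have h1 : Tendsto (fun n : ℕ => (1 / ((n + p : ℕ) : ℝ)) * Real.log (I x (n + p)))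
      atTop (𝓝 cx) := hcx.comp (tendsto_add_atTop_nat p)
  have ineq : ∀ n : ℕ, (1 / ((n + p : ℕ) : ℝ)) * (K + Real.log (I y n))
      ≤ (1 / ((n + p : ℕ) : ℝ)) * Real.log (I x (n + p)) := by
    intro n
    refine mul_le_mul_of_nonneg_left ?_ (one_div_nonneg.mpr (Nat.cast_nonneg _))
    rw [Nat.add_comm n p]
    exact hlog n
  have ha : Tendsto (fun n : ℕ => 1 / ((n : ℝ) + p)) atTop (𝓝 0) := by
    simp only [one_div]
    exact (tendsto_atTop_add_const_right atTop (p : ℝ)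
      tendsto_natCast_atTop_atTop).inv_tendsto_atTop
  have hb : Tendsto (fun n : ℕ => 1 - (p : ℝ) * (1 / ((n : ℝ) + p))) atTop (𝓝 1) := by
    have hc : Tendsto (fun _ : ℕ => (1 : ℝ)) atTop (𝓝 1) := tendsto_const_nhds
    have := hc.sub (ha.const_mul (p : ℝ))
    simpa using this
  have h2 : Tendsto (fun n : ℕ => (1 / ((n + p : ℕ) : ℝ)) * (K + Real.log (I y n)))
      atTop (𝓝 cy) := by
    have hmain : Tendsto (fun n : ℕ => (1 / ((n : ℝ) + p)) * K
        + (1 - (p : ℝ) * (1 / ((n : ℝ) + p))) * ((1 / (n : ℝ)) * Real.log (I y n)))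
        atTop (𝓝 cy) := by
      have := (ha.mul_const K).add (hb.mul hcy)
      simpa using this
    refine Tendsto.congr' ?_ hmain
    filter_upwards [eventually_ge_atTop 1] with n hn
    have hn0 : (n : ℝ) ≠ 0 := Nat.cast_ne_zero.mpr (by omega)
    have hnp : (n : ℝ) + p ≠ 0 := by positivity
    push_cast
    field_simp
    ring
  exact le_of_tendsto_of_tendsto' h2 h1 ineq


open MeasureTheory Filter Real Topology Set
open scoped ENNReal

/-- for an irreducible recurrent Markov chain, the exponential growth rate
`c(x,f) = lim (1/n) log E_x[e^{∑_{i<n} f(S_i)}]` does not depend on the starting point: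
if `‖f‖_∞ < (1/2) min(κ(x), κ(y))` then `c(x,f) = c(y,f)`. -/
theorem growth_rate_independent_of_start
    (St : Type*) [Countable St] [Nonempty St]
    [MeasurableSpace St] [MeasurableSingletonClass St]
    (Pm : St → Measure (ℕ → St)) [∀ x, IsProbabilityMeasure (Pm x)]
    (Ptrans : St → St → ℝ)
    (hstart : ∀ x, Pm x {ω | ω 0 = x} = 1)
    (hMarkov : ∀ x, ∀ (n : ℕ) (γ : ℕ → St),
      Pm x {ω | ∀ i ≤ n + 1, ω i = γ i}
        = Pm x {ω | ∀ i ≤ n, ω i = γ i} * ENNReal.ofReal (Ptrans (γ n) (γ (n + 1))))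
    -- irreducibility and recurrence
    (hirr : ∀ x y : St, ∃ n : ℕ, 0 < Pm x {ω | ω n = y})
    (hrec : ∀ x : St, ∀ᵐ ω ∂Pm x, ∃ n : ℕ, 1 ≤ n ∧ ω n = x)
    -- first return times and the exponential-moment thresholds κ(x)
    (τ : St → (ℕ → St) → ℕ) (hτ : ∀ x ω, τ x ω = sInf {n : ℕ | 1 ≤ n ∧ ω n = x})
    (κ : St → ℝ)
    (hκ : ∀ x, κ x = sSup {α : ℝ | 0 < α ∧
      Integrable (fun ω => Real.exp (α * τ x ω)) (Pm x)})
    -- the bounded function f, with ‖f‖_∞ < (1/2) min(κ(x), κ(y))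
    (f : St → ℝ) (hfbdd : ∃ M, ∀ z, |f z| ≤ M)
    (x y : St)
    (hfκ : (⨆ z : St, |f z|) < (1 / 2) * min (κ x) (κ y))
    -- the growth rates c(x,f) and c(y,f)
    (cx cy : ℝ)
    (hcx : Tendsto (fun n : ℕ => (1 / (n : ℝ)) *
        Real.log (∫ ω, Real.exp (∑ i ∈ Finset.range n, f (ω i)) ∂Pm x))
      atTop (𝓝 cx))
    (hcy : Tendsto (fun n : ℕ => (1 / (n : ℝ)) *
        Real.log (∫ ω, Real.exp (∑ i ∈ Finset.range n, f (ω i)) ∂Pm y))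
      atTop (𝓝 cy)) :
    cx = cy := by
  obtain ⟨M, hM⟩ := hfbdd
  exact le_antisymm
    (growth_le Pm Ptrans hstart hMarkov f M hM y x (hirr y x) cy cx hcy hcx)
    (growth_le Pm Ptrans hstart hMarkov f M hM x y (hirr x y) cx cy hcx hcy)
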